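/- Let a projective involution act on the points of a parabola 𝒫 (viewed as a conic in the projective plane). Then there is a fixed point Q such that for every pair (O₁, O₂) of points exchanged by the involution, the line O₁O₂ passes through Q. -/

import Mathlib

/-- **Frégier's theorem for the parabola.**  A projective involution of the parabola
`y = x²` is given in the parameter `t` by a Möbius map `t ↦ (a t + b)/(c t + d)` with
nonzero determinant and trace zero (`d = -a`).  All chords joining involutive pairs pass
through a single point of the projective plane: either a fixed affine point `Q`, or (if
the Frégier point is at infinity) the chords are all parallel to a fixed direction. -/
theorem fregier_parabola (a b c d : ℝ) (hdet : a * d - b * c ≠ 0) (htr : d = -a) :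
    (∃ Q : ℝ × ℝ, ∀ t : ℝ, c * t + d ≠ 0 →
      Collinear ℝ ({(t, t ^ 2), ((a * t + b) / (c * t + d),
        ((a * t + b) / (c * t + d)) ^ 2), Q} : Set (ℝ × ℝ))) ∨
    (∃ v : ℝ × ℝ, v ≠ 0 ∧ ∀ t : ℝ, c * t + d ≠ 0 →
      ∃ s : ℝ, ((a * t + b) / (c * t + d), ((a * t + b) / (c * t + d)) ^ 2) - ((t, t ^ 2) : ℝ × ℝ)
        = s • v) := by
  subst htr
  rcases eq_or_ne c 0 with hc | hc
  · -- c = 0 : chords are parallel, direction (1, -b/a)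
    right
    subst hc
    have ha : a ≠ 0 := by
      intro h
      apply hdet
      rw [h]; ring
    refine ⟨(1, -b / a), by simp [Prod.ext_iff], ?_⟩
    intro t ht
    have h0 : (0 : ℝ) * t + -a = -a := by ring
    have hna : (-a : ℝ) ≠ 0 := neg_ne_zero.mpr ha
    have hval : (a * t + b) / (0 * t + -a) = -t - b / a := by
      rw [h0, div_eq_iff hna]
      field_simp
      ring
    refine ⟨(a * t + b) / (0 * t + -a) - t, ?_⟩
    rw [hval]
    refine Prod.ext ?_ ?_
    · simp
    · simp only [Prod.snd_sub, Prod.smul_snd, smul_eq_mul]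
      field_simp
      ring
  · -- c ≠ 0 : Frégier point Q = (a/c, -b/c)
    left
    refine ⟨(a / c, -b / c), ?_⟩
    intro t ht
    set t' : ℝ := (a * t + b) / (c * t + -a) with ht'
    have key : t' * (c * t + -a) = a * t + b := div_mul_cancel₀ _ ht
    clear_value t'
    have hQmem : ((a / c, -b / c) : ℝ × ℝ) ∈
        ({(t, t ^ 2), (t', t' ^ 2), (a / c, -b / c)} : Set (ℝ × ℝ)) := by
      simp
    rw [collinear_iff_of_mem hQmem]
    refine ⟨(1, t + t'), ?_⟩
    intro p hp
    simp only [Set.mem_insert_iff, Set.mem_singleton_iff] at hp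
    rcases hp with rfl | rfl | rfl
    · refine ⟨t - a / c, ?_⟩
      refine Prod.ext ?_ ?_
      · simp only [Prod.fst_vadd, Prod.smul_fst, smul_eq_mul, vadd_eq_add, Prod.fst_add]
        field_simp
        ring
      · simp only [Prod.snd_vadd, Prod.smul_snd, smul_eq_mul, vadd_eq_add, Prod.snd_add]
        field_simp
        linear_combination -key
    · refine ⟨t' - a / c, ?_⟩
      refine Prod.ext ?_ ?_
      · simp only [Prod.fst_vadd, Prod.smul_fst, smul_eq_mul, vadd_eq_add, Prod.fst_add]
        field_simp
        ring
      · simp only [Prod.snd_vadd, Prod.smul_snd, smul_eq_mul, vadd_eq_add, Prod.snd_add]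
        field_simp
        linear_combination -key
    · exact ⟨0, by simp⟩
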